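/- Let Ω ⊂ ℝⁿ be a nonempty open bounded convex set, y ∈ Ω, and v ∈ ℝⁿ nonzero. Then lim_{t → 0⁺} d_Ω(y, y + t·v)/t = F_Ω(y, v) = (‖v‖/2)(1/‖y − v⁻‖ + 1/‖y − v⁺‖); that is, the Hilbert metric induces the Finsler structure F_Ω as its infinitesimal norm. -/

import Mathlib

open Set
open scoped Classical

/-- The Hilbert metric on a nonempty open bounded convex set `Ω ⊂ ℝⁿ`:
for `x ≠ y`, `d_Ω(x,y) = ½|log((‖y−p‖·‖x−q‖)/(‖y−q‖·‖x−p‖))|`, where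
`p = x + t⁻•(y−x)` and `q = x + t⁺•(y−x)` are the two intersection points of the
line through `x` and `y` with `∂Ω`, given by `t⁻ = inf {t | x + t•(y−x) ∈ Ω}` and
`t⁺ = sup {t | x + t•(y−x) ∈ Ω}`; and `d_Ω(x,x) = 0`. -/
noncomputable def hilbertDist {n : ℕ} (Ω : Set (EuclideanSpace ℝ (Fin n)))
    (x y : EuclideanSpace ℝ (Fin n)) : ℝ :=
  if x = y then 0
  else
    let p := x + sInf {t : ℝ | x + t • (y - x) ∈ Ω} • (y - x)
    let q := x + sSup {t : ℝ | x + t • (y - x) ∈ Ω} • (y - x)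
    (1 / 2) * |Real.log ((‖y - p‖ * ‖x - q‖) / (‖y - q‖ * ‖x - p‖))|

/-- The Hilbert–Finsler norm of a nonempty open bounded convex `Ω ⊂ ℝⁿ` at `y ∈ Ω`:
for `v ≠ 0`, `F_Ω(y,v) = (‖v‖/2)(1/‖y − v⁻‖ + 1/‖y − v⁺‖)`, where
`v⁻ = y + t⁻•v` and `v⁺ = y + t⁺•v` are the intersection points of the line through
`y` in direction `v` with `∂Ω`, given by `t⁻ = inf {t | y + t•v ∈ Ω}` and
`t⁺ = sup {t | y + t•v ∈ Ω}` (so `v⁺` is on the side of positive multiples of `v`);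
and `F_Ω(y,0) = 0`. -/
noncomputable def hilbertFinsler {n : ℕ} (Ω : Set (EuclideanSpace ℝ (Fin n)))
    (y v : EuclideanSpace ℝ (Fin n)) : ℝ :=
  if v = 0 then 0
  else
    let vm := y + sInf {t : ℝ | y + t • v ∈ Ω} • v
    let vp := y + sSup {t : ℝ | y + t • v ∈ Ω} • v
    (‖v‖ / 2) * (1 / ‖y - vm‖ + 1 / ‖y - vp‖)

open scoped Pointwise

/-- The Hilbert metric induces the Finsler structure `F_Ω` as its infinitesimal norm:
for `y ∈ Ω` and `v ≠ 0`, `lim_{t→0⁺} d_Ω(y, y + t•v)/t = F_Ω(y,v)`, and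
`F_Ω(y,v) = (‖v‖/2)(1/‖y − v⁻‖ + 1/‖y − v⁺‖)` where `v⁻`, `v⁺` are the intersection
points of the line through `y` in direction `v` with `∂Ω`. -/
theorem hilbertDist_infinitesimal_finsler {n : ℕ}
    (Ω : Set (EuclideanSpace ℝ (Fin n)))
    (hne : Ω.Nonempty) (hopen : IsOpen Ω) (hbdd : Bornology.IsBounded Ω)
    (hconv : Convex ℝ Ω) (y : EuclideanSpace ℝ (Fin n)) (hy : y ∈ Ω)
    (v : EuclideanSpace ℝ (Fin n)) (hv : v ≠ 0) :
    Filter.Tendsto (fun t : ℝ => hilbertDist Ω y (y + t • v) / t)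
      (nhdsWithin 0 (Set.Ioi 0)) (nhds (hilbertFinsler Ω y v)) ∧
    hilbertFinsler Ω y v =
      (‖v‖ / 2) * (1 / ‖y - (y + sInf {t : ℝ | y + t • v ∈ Ω} • v)‖ +
        1 / ‖y - (y + sSup {t : ℝ | y + t • v ∈ Ω} • v)‖) := by
  have hvn : (0:ℝ) < ‖v‖ := norm_pos_iff.mpr hv
  set S : Set ℝ := {t : ℝ | y + t • v ∈ Ω} with hSdef
  have hSopen : IsOpen S := by
    have hc : Continuous fun t : ℝ => y + t • v := by continuity
    exact hopen.preimage hc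
  have hS0 : (0:ℝ) ∈ S := by simp [hSdef, hy]
  obtain ⟨C, hC⟩ := isBounded_iff_forall_norm_le.mp hbdd
  have hbd : ∀ t ∈ S, |t| ≤ (C + ‖y‖) / ‖v‖ := by
    intro t ht
    rw [le_div_iff₀ hvn]
    have h1 : ‖t • v‖ ≤ ‖y + t • v‖ + ‖y‖ := by
      calc ‖t • v‖ = ‖(y + t • v) - y‖ := by rw [add_sub_cancel_left]
        _ ≤ ‖y + t • v‖ + ‖y‖ := norm_sub_le _ _
    have h2 := hC _ ht
    rw [norm_smul, Real.norm_eq_abs] at h1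
    linarith
  have hbb : BddBelow S := ⟨-((C + ‖y‖) / ‖v‖), fun t ht => (abs_le.mp (hbd t ht)).1⟩
  have hba : BddAbove S := ⟨(C + ‖y‖) / ‖v‖, fun t ht => (abs_le.mp (hbd t ht)).2⟩
  set a := sInf S with ha
  set b := sSup S with hb
  obtain ⟨ε, hε, hball⟩ := Metric.isOpen_iff.mp hSopen 0 hS0
  have hmem : ∀ s : ℝ, |s| < ε → s ∈ S := fun s hs => hball (by simpa [Real.dist_eq] using hs)
  have ha0 : a < 0 := by
    have : -(ε/2) ∈ S := hmem _ (by rw [abs_neg, abs_of_pos (by linarith)]; linarith)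
    have := csInf_le hbb this
    linarith
  have hb0 : 0 < b := by
    have : ε/2 ∈ S := hmem _ (by rw [abs_of_pos (by linarith)]; linarith)
    have := le_csSup hba this
    linarith
  have ha' : a ≠ 0 := ne_of_lt ha0
  have hna : (-a) ≠ 0 := by linarith
  have hbne : b ≠ 0 := hb0.ne'
  have hvne : ‖v‖ ≠ 0 := hvn.ne'
  set D : ℝ := 1/(-a) + 1/b with hD
  have hDpos : 0 < D := add_pos (one_div_pos.mpr (by linarith)) (one_div_pos.mpr hb0)
  -- derivative of the cross-ratio logarithm
  have hg : HasDerivAt (fun s : ℝ => ((s - a) * b) / ((b - s) * (-a))) D 0 := by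
    have h1 : HasDerivAt (fun s : ℝ => (s - a) * b) b 0 := by
      simpa using ((hasDerivAt_id (0:ℝ)).sub_const a).mul_const b
    have h2 : HasDerivAt (fun s : ℝ => (b - s) * (-a)) a 0 := by
      simpa using ((hasDerivAt_const (0:ℝ) b).sub (hasDerivAt_id 0)).mul_const (-a)
    have hd0 : ((b - (0:ℝ)) * (-a)) ≠ 0 := by
      apply mul_ne_zero
      · simpa using hbne
      · exact hna
    have := h1.div h2 hd0
    have e : D = (b * ((b - 0) * -a) - (0 - a) * b * a) / ((b - 0) * -a) ^ 2 := by
      rw [hD]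
      field_simp
      ring
    rw [e]
    exact this
  have hg0 : (((0:ℝ) - a) * b) / ((b - 0) * (-a)) = 1 := by
    field_simp
    ring
  have hlog : HasDerivAt (fun s : ℝ => Real.log (((s - a) * b) / ((b - s) * (-a)))) D 0 := by
    convert hg.log (by rw [hg0]; exact one_ne_zero) using 1
    rw [hg0, div_one]
  have hslope : Filter.Tendsto
      (fun t : ℝ => Real.log (((t - a) * b) / ((b - t) * (-a))) / t)
      (nhdsWithin 0 (Set.Ioi 0)) (nhds D) := by
    have h1 := hasDerivAt_iff_tendsto_slope.mp hlog
    have h2 : Filter.Tendsto (slope (fun s : ℝ => Real.log (((s - a) * b) / ((b - s) * (-a)))) 0)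
        (nhdsWithin 0 (Set.Ioi 0)) (nhds D) :=
      h1.mono_left (nhdsWithin_mono 0 (fun x hx => Set.mem_compl_singleton_iff.mpr (ne_of_gt hx)))
    refine h2.congr (fun t => ?_)
    rw [slope_def_field]
    rw [hg0, Real.log_one]
    ring
  have htend : Filter.Tendsto
      (fun t : ℝ => (1/2) * |Real.log (((t - a) * b) / ((b - t) * (-a))) / t|)
      (nhdsWithin 0 (Set.Ioi 0)) (nhds ((1/2) * |D|)) :=
    (hslope.abs).const_mul _
  -- norms
  have n4 : ‖y - (y + a • v)‖ = (-a) * ‖v‖ := by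
    have h : y - (y + a • v) = -(a • v) := by abel
    rw [h, norm_neg, norm_smul, Real.norm_eq_abs, abs_of_neg ha0]
  have n2 : ‖y - (y + b • v)‖ = b * ‖v‖ := by
    have h : y - (y + b • v) = -(b • v) := by abel
    rw [h, norm_neg, norm_smul, Real.norm_eq_abs, abs_of_pos hb0]
  have hFval : hilbertFinsler Ω y v = (1/2) * |D| := by
    rw [abs_of_pos hDpos]
    simp only [hilbertFinsler, if_neg hv]
    rw [← hSdef, ← ha, ← hb, n4, n2, hD]
    field_simp
  constructor
  · rw [hFval]
    refine htend.congr' ?_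
    filter_upwards [Ioo_mem_nhdsGT_of_mem (Set.left_mem_Ico.mpr hb0)] with t ht
    obtain ⟨ht0, htb⟩ := ht
    have htne : t ≠ 0 := ht0.ne'
    have hxy : ¬ (y = y + t • v) := by
      simp [left_eq_add, smul_eq_zero, hv, htne]
    have hT : {s : ℝ | y + s • (t • v) ∈ Ω} = t⁻¹ • S := by
      ext s
      rw [Set.mem_smul_set_iff_inv_smul_mem₀ (inv_ne_zero htne)]
      simp [hSdef, smul_smul, mul_comm]
    have hInf : sInf {s : ℝ | y + s • (t • v) ∈ Ω} = t⁻¹ * a := by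
      rw [hT, Real.sInf_smul_of_nonneg (inv_nonneg.mpr ht0.le), smul_eq_mul, ← ha]
    have hSup : sSup {s : ℝ | y + s • (t • v) ∈ Ω} = t⁻¹ * b := by
      rw [hT, Real.sSup_smul_of_nonneg (inv_nonneg.mpr ht0.le), smul_eq_mul, ← hb]
    have hpa : (t⁻¹ * a) • (t • v) = a • v := by
      rw [smul_smul, mul_comm t⁻¹ a, mul_assoc, inv_mul_cancel₀ htne, mul_one]
    have hpb : (t⁻¹ * b) • (t • v) = b • v := by
      rw [smul_smul, mul_comm t⁻¹ b, mul_assoc, inv_mul_cancel₀ htne, mul_one]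
    have n1 : ‖(y + t • v) - (y + a • v)‖ = (t - a) * ‖v‖ := by
      have h : (y + t • v) - (y + a • v) = (t - a) • v := by rw [sub_smul]; abel
      rw [h, norm_smul, Real.norm_eq_abs, abs_of_pos (by linarith)]
    have n3 : ‖(y + t • v) - (y + b • v)‖ = (b - t) * ‖v‖ := by
      have h : (y + t • v) - (y + b • v) = (t - b) • v := by rw [sub_smul]; abel
      rw [h, norm_smul, Real.norm_eq_abs, abs_of_neg (by linarith : t - b < 0), neg_sub]
    simp only [hilbertDist, if_neg hxy, add_sub_cancel_left, hInf, hSup, hpa, hpb]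
    rw [n1, n2, n3, n4]
    have harg : ((t - a) * ‖v‖ * (b * ‖v‖)) / ((b - t) * ‖v‖ * ((-a) * ‖v‖))
        = ((t - a) * b) / ((b - t) * (-a)) := by
      rw [mul_mul_mul_comm, mul_mul_mul_comm (b - t)]
      rw [mul_div_mul_right _ _ (mul_ne_zero hvne hvne)]
    rw [harg, abs_div, abs_of_pos ht0]
    ring
  · simp only [hilbertFinsler, if_neg hv]
    rfl
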